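/- For all x, α ∈ ℝ^k and g ∈ G one has Φ_x(j'(α, g)) = j'(α + x/r, g·E'(x/r)). Consequently, if ω ∈ ℝ^k and T₀ denotes the closure in G of the one-parameter subgroup {E'(tω/r) : t ∈ ℝ}, then for every g ∈ G the set P'_{g·m̄} := j'(T^k × gT₀) is invariant under the flow t ↦ Φ_{tω}. -/

import Mathlib

open scoped Manifold
open Function Set Topology

noncomputable section

/-- The standard `n`-torus `Tⁿ = ℝⁿ/ℤⁿ`. -/
abbrev Torus (n : ℕ) : Type := Fin n → AddCircle (1 : ℝ)

/-- The canonical projection `ℝⁿ → Tⁿ`. -/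
def toTorus {n : ℕ} (x : Fin n → ℝ) : Torus n := fun i => (x i : AddCircle (1 : ℝ))

/-- A vector in `ℝⁿ` is nonresonant if its components are linearly independent over `ℤ`
(equivalently, over `ℚ`). -/
def Nonresonant {n : ℕ} (ω : Fin n → ℝ) : Prop :=
  ∀ p : Fin n → ℤ, (∑ i, (p i : ℝ) * ω i) = 0 → p = 0

variable {k : ℕ}
  -- `G` is a compact connected Lie group …
  {EG : Type*} [NormedAddCommGroup EG] [NormedSpace ℝ EG] [FiniteDimensional ℝ EG]
  {HG : Type*} [TopologicalSpace HG] {IG : ModelWithCorners ℝ EG HG}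
  {G : Type*} [TopologicalSpace G] [ChartedSpace HG G] [Group G] [IsTopologicalGroup G]
  [LieGroup IG (⊤ : ℕ∞) G] [CompactSpace G] [ConnectedSpace G]
  -- … acting smoothly and freely on a compact smooth manifold `F`
  {EF : Type*} [NormedAddCommGroup EF] [NormedSpace ℝ EF]
  {HF : Type*} [TopologicalSpace HF] {IF : ModelWithCorners ℝ EF HF}
  {F : Type*} [TopologicalSpace F] [ChartedSpace HF F] [IsManifold IF (⊤ : ℕ∞) F]
  [CompactSpace F] [MulAction G F] [ContinuousSMul G F]

/-- **Equation (15)**: `Φ_x(j'(α,g)) = j'(α + x/r, g·E'(x/r))`; consequently, for `ω ∈ ℝᵏ`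
and `T₀` the closure of the one-parameter subgroup `{E'(tω/r)}`, each set
`P'_{g·m̄} = j'(Tᵏ × gT₀)` is invariant under the flow `t ↦ Φ_{tω}`. -/
theorem flow_in_j'_coordinates_and_invariance
    (hk : 1 ≤ k)
    -- the action of `G` on `F` is smooth and free
    (hactsmooth : ContMDiff (IG.prod IF) IF (⊤ : ℕ∞) fun p : G × F => p.1 • p.2)
    (hfree : ∀ (g : G) (m : F), g • m = m → g = 1)
    -- `Φ` is a smooth action of `(ℝᵏ, +)` on `F` commuting with the `G`-action
    (Φ : (Fin k → ℝ) → F → F)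
    (hΦsmooth : ContMDiff ((𝓘(ℝ, Fin k → ℝ)).prod IF) IF (⊤ : ℕ∞) fun p : (Fin k → ℝ) × F => Φ p.1 p.2)
    (hΦzero : ∀ m, Φ 0 m = m)
    (hΦadd : ∀ (x y : Fin k → ℝ) (m : F), Φ (x + y) m = Φ x (Φ y m))
    (hΦequiv : ∀ (x : Fin k → ℝ) (g : G) (m : F), Φ x (g • m) = g • Φ x m)
    -- (a) `Φ x m` is in the `G`-orbit of `m` iff `x ∈ ℤᵏ`
    (hperiod : ∀ (m : F) (x : Fin k → ℝ),
      (∃ g : G, Φ x m = g • m) ↔ ∃ z : Fin k → ℤ, x = fun i => (z i : ℝ))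
    -- (b) any two points of `F` are joined by the flow up to the `G`-action
    (htrans : ∀ m m' : F, ∃ (x : Fin k → ℝ) (g : G), Φ x m = g • m')
    -- a fixed point `m̄` and the phases `γ̄ᵢ` of the lifts at `m̄`
    (mbar : F) (γbar : Fin k → G)
    (hγbar : ∀ i, Φ (Pi.single i 1) mbar = γbar i • mbar)
    -- a positive integer `r` and an abelian subgroup `A` of `G` containing the `γ̄ᵢ`
    (r : ℕ) (hr : 0 < r)
    (A : Subgroup G) (hAab : ∀ a ∈ A, ∀ b ∈ A, a * b = b * a)
    (hγA : ∀ i, γbar i ∈ A)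
    -- `E' : ℝᵏ → G` is a smooth homomorphism with image in `A` and `E' eᵢ = γ̄ᵢʳ`
    (E' : (Fin k → ℝ) → G)
    (hE'0 : E' 0 = 1)
    (hE'add : ∀ x y, E' (x + y) = E' x * E' y)
    (hE'smooth : ContMDiff (𝓘(ℝ, Fin k → ℝ)) IG (⊤ : ℕ∞) E')
    (hE'A : ∀ x, E' x ∈ A)
    (hE'γ : ∀ i, E' (Pi.single i 1) = γbar i ^ r)
    -- the map `j' (α, g) = g • E'(α)⁻¹ • Φ_{rα} m̄`
    (j' : (Fin k → ℝ) → G → F)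
    (hj' : ∀ (α : Fin k → ℝ) (g : G), j' α g = g • (E' α)⁻¹ • Φ ((r : ℝ) • α) mbar)
    :
    (∀ (x α : Fin k → ℝ) (g : G),
        Φ x (j' α g) = j' (α + (r : ℝ)⁻¹ • x) (g * E' ((r : ℝ)⁻¹ • x))) ∧
    ∀ (ω : Fin k → ℝ) (T₀ : Set G),
      T₀ = closure {g : G | ∃ t : ℝ, g = E' ((r : ℝ)⁻¹ • t • ω)} →
      ∀ (g : G) (t : ℝ),
        Φ (t • ω) '' {y : F | ∃ (α : Fin k → ℝ) (h : G), h ∈ T₀ ∧ y = j' α (g * h)} ⊆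
          {y : F | ∃ (α : Fin k → ℝ) (h : G), h ∈ T₀ ∧ y = j' α (g * h)} := by
  have hrne : (r:ℝ) ≠ 0 := Nat.cast_ne_zero.2 hr.ne'
  have key : ∀ (x α : Fin k → ℝ) (g : G),
      Φ x (j' α g) = j' (α + (r : ℝ)⁻¹ • x) (g * E' ((r : ℝ)⁻¹ • x)) := by
    intro x α g
    rw [hj', hj']
    have hscal : (r : ℝ) • (α + (r : ℝ)⁻¹ • x) = (r : ℝ) • α + x := by
      rw [smul_add, smul_smul, mul_inv_cancel₀ hrne, one_smul]
    rw [hscal, hE'add]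
    have hinv : (E' α * E' ((r:ℝ)⁻¹ • x))⁻¹
        = (E' ((r:ℝ)⁻¹ • x))⁻¹ * (E' α)⁻¹ := mul_inv_rev _ _
    rw [hinv]
    rw [hΦequiv, hΦequiv]
    rw [mul_smul, mul_smul, smul_inv_smul]
    rw [← hΦadd]
    congr 1
    abel
  refine ⟨key, ?_⟩
  intro ω T₀ hT₀ g t y hy
  rcases hy with ⟨z, ⟨α, h, hh, rfl⟩, rfl⟩
  refine ⟨α + (r:ℝ)⁻¹ • (t • ω), h * E' ((r:ℝ)⁻¹ • (t • ω)), ?_, ?_⟩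
  · -- closure stability
    have hmap : MapsTo (fun u : G => u * E' ((r:ℝ)⁻¹ • (t • ω)))
        {g : G | ∃ s : ℝ, g = E' ((r : ℝ)⁻¹ • s • ω)}
        {g : G | ∃ s : ℝ, g = E' ((r : ℝ)⁻¹ • s • ω)} := by
      rintro u ⟨s, rfl⟩
      refine ⟨s + t, ?_⟩
      dsimp only
      rw [← hE'add]
      congr 1
      rw [← smul_add, ← add_smul]
    have hcont : Continuous (fun u : G => u * E' ((r:ℝ)⁻¹ • (t • ω))) :=
      continuous_id.mul continuous_const
    rw [hT₀] at hh ⊢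
    exact hmap.closure hcont hh
  · rw [key]
    congr 1
    rw [mul_assoc]
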